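/- Let A, B be strings of lengths m and n, σ a character, and let K'' be the all scores matrix of Aσ (σ appended to A) and B. Then for all 0 ≤ i ≤ j ≤ n: if k = prevmatch(j,σ,B) > −∞ then K''[i,j] = max( K[i,j], K[i,k−1] + 1 ), and if prevmatch(j,σ,B) = −∞ then K''[i,j] = K[i,j]. -/
import Mathlib


variable {α : Type*}

/-- LCS of two lists: the maximum length of a common sublist. -/
noncomputable def LCS (X Y : List α) : ℕ :=
  sSup {k | ∃ Z : List α, Z.length = k ∧ Z.Sublist X ∧ Z.Sublist Y}

/-- `substr S i j` is S[i..j]: the characters of S at (1-based) positions i+1,…,j. -/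
def substr (S : List α) (i j : ℕ) : List α := (S.take j).drop i

/-- The density matrix D□ of a matrix D. -/
def density (D : ℕ → ℕ → ℤ) (i j : ℕ) : ℤ :=
  D i j + D (i - 1) (j - 1) - D (i - 1) j - D i (j - 1)

/-- The all scores matrix K of A and B: K[i,j] = LCS(B[i..j], A) if i ≤ j, else j - i. -/
noncomputable def Kmat (A B : List α) (i j : ℕ) : ℤ :=
  if i ≤ j then (LCS (substr B i j) A : ℤ) else (j : ℤ) - (i : ℤ)

/-- The all scores matrix P of A and B: P[i,j] = LCS(B[i..n], A[0..j]). -/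
noncomputable def Pmat (A B : List α) (i j : ℕ) : ℤ :=
  (LCS (substr B i B.length) (substr A 0 j) : ℤ)

/-- nextmatch(i,σ,B): minimum (1-based) position i' with i < i' ≤ |B| and B[i'] = σ; ⊤ (∞) if none. -/
noncomputable def nextmatch (i : ℕ) (σ : α) (B : List α) : ℕ∞ :=
  sInf {k : ℕ∞ | ∃ k' : ℕ, k = (k' : ℕ∞) ∧ i < k' ∧ k' ≤ B.length ∧ B[k' - 1]? = some σ}

/-- prevmatch(j,σ,B): maximum (1-based) position i' with 1 ≤ i' ≤ j and B[i'] = σ; ⊥ (−∞) if none. -/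
noncomputable def prevmatch (j : ℕ) (σ : α) (B : List α) : WithBot ℕ :=
  sSup {k : WithBot ℕ | ∃ k' : ℕ, k = (k' : WithBot ℕ) ∧ 1 ≤ k' ∧ k' ≤ j ∧ B[k' - 1]? = some σ}

/- ### auxiliary lemmas -/

lemma lcs_bddAbove (X Y : List α) :
    BddAbove {k | ∃ Z : List α, Z.length = k ∧ Z.Sublist X ∧ Z.Sublist Y} :=
  ⟨X.length, fun _ ⟨Z, hl, hX, _⟩ => hl ▸ hX.length_le⟩

lemma length_le_LCS {Z X Y : List α} (hX : Z.Sublist X) (hY : Z.Sublist Y) :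
    Z.length ≤ LCS X Y :=
  le_csSup (lcs_bddAbove X Y) ⟨Z, rfl, hX, hY⟩

lemma exists_LCS (X Y : List α) :
    ∃ Z : List α, Z.length = LCS X Y ∧ Z.Sublist X ∧ Z.Sublist Y :=
  Nat.sSup_mem (s := {k | ∃ Z : List α, Z.length = k ∧ Z.Sublist X ∧ Z.Sublist Y})
    ⟨0, [], rfl, List.nil_sublist _, List.nil_sublist _⟩ (lcs_bddAbove X Y)

lemma LCS_le {X Y : List α} {k : ℕ}
    (h : ∀ Z : List α, Z.Sublist X → Z.Sublist Y → Z.length ≤ k) : LCS X Y ≤ k :=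
  csSup_le ⟨0, [], rfl, List.nil_sublist _, List.nil_sublist _⟩
    (fun _ ⟨Z, hl, hX, hY⟩ => hl ▸ h Z hX hY)

lemma LCS_append_notMem {S A : List α} {σ : α} (h : σ ∉ S) :
    LCS S (A ++ [σ]) = LCS S A := by
  apply le_antisymm
  · apply LCS_le; intro Z hS hA
    rcases List.sublist_append_iff.1 hA with ⟨Z1, Z2, rfl, h1, h2⟩
    rcases List.sublist_singleton.1 h2 with rfl | rfl
    · simpa using length_le_LCS (by simpa using hS) h1
    · exact absurd (hS.subset (by simp)) h
  · apply LCS_le; intro Z hS hA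
    exact length_le_LCS hS (hA.trans (List.sublist_append_left A [σ]))

lemma LCS_append_core {S A : List α} {σ : α} {p : ℕ} (hp : p < S.length)
    (hgp : S[p] = σ) (hafter : σ ∉ S.drop (p + 1)) :
    LCS S (A ++ [σ]) = max (LCS S A) (LCS (S.take p) A + 1) := by
  apply le_antisymm
  · apply LCS_le; intro Z hS hA
    rcases List.sublist_append_iff.1 hA with ⟨Z1, Z2, rfl, h1, h2⟩
    rcases List.sublist_singleton.1 h2 with rfl | rfl
    · exact le_max_of_le_left (by simpa using length_le_LCS (by simpa using hS) h1)
    · rcases List.append_sublist_iff.1 hS with ⟨S1, S2, hSeq, g1, g2⟩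
      have hσ2 : σ ∈ S2 := g2.subset (by simp)
      obtain ⟨t, hgt⟩ := List.mem_iff_getElem?.1 hσ2
      have hSq : S[S1.length + t]? = some σ := by
        rw [hSeq, List.getElem?_append_right (by omega)]
        simpa using hgt
      have htlen : S1.length + t < S.length := (List.getElem?_eq_some_iff.1 hSq).1
      have hq : S1.length + t ≤ p := by
        by_contra hcon
        push_neg at hcon
        apply hafter
        rw [List.mem_iff_getElem?]
        refine ⟨S1.length + t - (p + 1), ?_⟩
        rw [List.getElem?_drop]
        have hidx : p + 1 + (S1.length + t - (p + 1)) = S1.length + t := by omega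
        rw [hidx]
        exact hSq
      have hS1take : Z1.Sublist (S.take p) := by
        have h1' : S1 = S.take S1.length := by
          rw [hSeq, List.take_left]
        have h2' : (S.take S1.length).Sublist (S.take p) := by
          have heq : (S.take p).take S1.length = S.take S1.length := by
            rw [List.take_take, min_eq_left (by omega)]
          rw [← heq]; exact List.take_sublist _ _
        exact g1.trans (h1' ▸ h2')
      have hlen := length_le_LCS hS1take h1
      refine le_max_of_le_right ?_
      simpa using Nat.succ_le_succ hlen
  · apply max_le
    · obtain ⟨Z, hl, hX, hY⟩ := exists_LCS S A
      exact hl ▸ length_le_LCS hX (hY.trans (List.sublist_append_left _ _))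
    · obtain ⟨Z, hl, hX, hY⟩ := exists_LCS (S.take p) A
      have h1 : (Z ++ [σ]).Sublist S := by
        have htp : S.take p ++ [σ] = S.take (p + 1) := by
          rw [List.take_succ, List.getElem?_eq_getElem hp, hgp]
          rfl
        have hts : (S.take p ++ [σ]).Sublist S := htp ▸ List.take_sublist _ _
        exact (hX.append (List.Sublist.refl [σ])).trans hts
      have h2 : (Z ++ [σ]).Sublist (A ++ [σ]) := hY.append (List.Sublist.refl _)
      have := length_le_LCS h1 h2
      simpa [hl] using this

lemma prevmatch_bdd (j : ℕ) (σ : α) (B : List α) :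
    BddAbove {k : WithBot ℕ | ∃ k' : ℕ, k = (k' : WithBot ℕ) ∧ 1 ≤ k' ∧ k' ≤ j ∧ B[k' - 1]? = some σ} :=
  ⟨(j : WithBot ℕ), fun _ ⟨_, hx, _, hk'', _⟩ => hx ▸ WithBot.coe_le_coe.2 hk''⟩

lemma prevmatch_eq_bot {j : ℕ} {σ : α} {B : List α} (h : prevmatch j σ B = ⊥) :
    ∀ k' : ℕ, 1 ≤ k' → k' ≤ j → B[k' - 1]? ≠ some σ := by
  intro k' h1 h2 hk
  have hmem : (k' : WithBot ℕ) ∈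
      {k : WithBot ℕ | ∃ k' : ℕ, k = (k' : WithBot ℕ) ∧ 1 ≤ k' ∧ k' ≤ j ∧ B[k' - 1]? = some σ} :=
    ⟨k', rfl, h1, h2, hk⟩
  have hle := le_csSup (prevmatch_bdd j σ B) hmem
  rw [prevmatch] at h
  rw [h] at hle
  simp at hle

lemma prevmatch_eq_coe {j k : ℕ} {σ : α} {B : List α}
    (h : prevmatch j σ B = (k : WithBot ℕ)) :
    1 ≤ k ∧ k ≤ j ∧ B[k - 1]? = some σ ∧
      ∀ k' : ℕ, k < k' → k' ≤ j → B[k' - 1]? ≠ some σ := by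
  have hne : {k' : ℕ | 1 ≤ k' ∧ k' ≤ j ∧ B[k' - 1]? = some σ}.Nonempty := by
    by_contra hne
    rw [Set.not_nonempty_iff_eq_empty, Set.eq_empty_iff_forall_notMem] at hne
    have hTe : {x : WithBot ℕ | ∃ k' : ℕ, x = (k' : WithBot ℕ) ∧ 1 ≤ k' ∧ k' ≤ j ∧
        B[k' - 1]? = some σ} = ∅ := by
      rw [Set.eq_empty_iff_forall_notMem]
      rintro x ⟨k', rfl, h1, h2, h3⟩
      exact hne k' ⟨h1, h2, h3⟩
    rw [prevmatch, hTe, WithBot.sSup_empty] at h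
    simp at h
  have hfin : {k' : ℕ | 1 ≤ k' ∧ k' ≤ j ∧ B[k' - 1]? = some σ}.Finite :=
    (Set.finite_Icc 1 j).subset (fun x hx => ⟨hx.1, hx.2.1⟩)
  have hFne : hfin.toFinset.Nonempty := by rwa [Set.Finite.toFinset_nonempty]
  have hMmem : hfin.toFinset.max' hFne ∈ {k' : ℕ | 1 ≤ k' ∧ k' ≤ j ∧ B[k' - 1]? = some σ} :=
    hfin.mem_toFinset.1 (Finset.max'_mem _ _)
  have hMub : ∀ x ∈ {k' : ℕ | 1 ≤ k' ∧ k' ≤ j ∧ B[k' - 1]? = some σ},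
      x ≤ hfin.toFinset.max' hFne := fun x hx =>
    Finset.le_max' _ x (hfin.mem_toFinset.2 hx)
  have hsup : prevmatch j σ B = ((hfin.toFinset.max' hFne : ℕ) : WithBot ℕ) := by
    rw [prevmatch]
    apply le_antisymm
    · refine csSup_le ⟨((hfin.toFinset.max' hFne : ℕ) : WithBot ℕ),
        hfin.toFinset.max' hFne, rfl, hMmem.1, hMmem.2.1, hMmem.2.2⟩ ?_
      rintro x ⟨k', rfl, h1, h2, h3⟩
      exact WithBot.coe_le_coe.2 (hMub k' ⟨h1, h2, h3⟩)
    · exact le_csSup (prevmatch_bdd j σ B) ⟨_, rfl, hMmem.1, hMmem.2.1, hMmem.2.2⟩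
  have hkM : k = hfin.toFinset.max' hFne := WithBot.coe_inj.1 (h.symm.trans hsup)
  refine ⟨hkM ▸ hMmem.1, hkM ▸ hMmem.2.1, hkM ▸ hMmem.2.2, ?_⟩
  intro k' hlt hle hk'
  have := hMub k' ⟨by omega, hle, hk'⟩
  omega

lemma substr_getElem? (B : List α) {i j t : ℕ} (ht : i + t < j) :
    (substr B i j)[t]? = B[i + t]? := by
  rw [substr, List.getElem?_drop, List.getElem?_take, if_pos ht]

/-- effect of appending σ to A on the all scores matrix K. -/
theorem stmt_10 {α : Type*} (A B : List α) (m n : ℕ)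
    (hA : A.length = m) (hB : B.length = n) (σ : α) :
    ∀ i j : ℕ, i ≤ j → j ≤ n →
      (∀ k : ℕ, prevmatch j σ B = (k : WithBot ℕ) →
        Kmat (A ++ [σ]) B i j = max (Kmat A B i j) (Kmat A B i (k - 1) + 1)) ∧
      (prevmatch j σ B = ⊥ → Kmat (A ++ [σ]) B i j = Kmat A B i j) := by
  intro i j hij hjn
  subst hB
  obtain ⟨S, hS⟩ : ∃ S', substr B i j = S' := ⟨_, rfl⟩
  have hSlen : S.length = j - i := by
    rw [← hS, substr, List.length_drop, List.length_take, min_eq_left hjn]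
  have hSget : ∀ t : ℕ, i + t < j → S[t]? = B[i + t]? := by
    intro t ht
    rw [← hS]; exact substr_getElem? B ht
  have hmemS : ∀ σ' ∈ S, ∃ t, i + t < j ∧ B[i + t]? = some σ' := by
    intro σ' hσ'
    obtain ⟨t, hgt⟩ := List.mem_iff_getElem?.1 hσ'
    have ht : t < S.length := (List.getElem?_eq_some_iff.1 hgt).1
    rw [hSlen] at ht
    exact ⟨t, by omega, by rw [← hSget t (by omega)]; exact hgt⟩
  constructor
  · intro k hk
    obtain ⟨hk1, hkj, hkσ, hkmax⟩ := prevmatch_eq_coe hk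
    by_cases hki : k ≤ i
    · have hσS : σ ∉ S := by
        intro hσ
        obtain ⟨t, ht, hgt⟩ := hmemS σ hσ
        exact hkmax (i + t + 1) (by omega) (by omega) (by simpa using hgt)
      have hik1 : ¬ (i ≤ k - 1) := by omega
      rw [Kmat, Kmat, Kmat, if_pos hij, if_pos hij, if_neg hik1, hS,
        LCS_append_notMem hσS, max_eq_left]
      have hle : ((k - 1 : ℕ) : ℤ) - (i : ℤ) + 1 ≤ 0 := by omega
      exact le_trans hle (by positivity)
    · push_neg at hki
      have hplt : k - 1 - i < S.length := by rw [hSlen]; omega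
      have hSp? : S[k - 1 - i]? = some σ := by
        rw [hSget (k - 1 - i) (by omega)]
        have : i + (k - 1 - i) = k - 1 := by omega
        rw [this]; exact hkσ
      obtain ⟨hplt', hgp⟩ := List.getElem?_eq_some_iff.1 hSp?
      have hafter : σ ∉ S.drop (k - 1 - i + 1) := by
        intro hσ
        obtain ⟨t, hgt⟩ := List.mem_iff_getElem?.1 hσ
        rw [List.getElem?_drop] at hgt
        have hb : k - 1 - i + 1 + t < S.length := (List.getElem?_eq_some_iff.1 hgt).1
        rw [hSlen] at hb
        have hBt : B[i + (k - 1 - i + 1 + t)]? = some σ := by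
          rw [← hSget _ (by omega)]; exact hgt
        have hidx : i + (k - 1 - i + 1 + t) = k + t := by omega
        rw [hidx] at hBt
        exact hkmax (k + t + 1) (by omega) (by omega) (by simpa using hBt)
      have hcore := LCS_append_core (A := A) hplt' hgp hafter
      have hik1 : i ≤ k - 1 := by omega
      have hsub : substr B i (k - 1) = S.take (k - 1 - i) := by
        rw [← hS, substr, substr, List.take_drop, List.take_take]
        have h1 : i + (k - 1 - i) = k - 1 := by omega
        have h2 : min (k - 1) j = k - 1 := by omega
        rw [h1, h2]
      rw [Kmat, Kmat, Kmat, if_pos hij, if_pos hij, if_pos hik1, hS, hsub, hcore]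
      push_cast [Nat.cast_max]
      ring_nf
  · intro hbot
    have hb := prevmatch_eq_bot hbot
    have hσS : σ ∉ S := by
      intro hσ
      obtain ⟨t, ht, hgt⟩ := hmemS σ hσ
      exact hb (i + t + 1) (by omega) (by omega) (by simpa using hgt)
    rw [Kmat, Kmat, if_pos hij, if_pos hij, hS, LCS_append_notMem hσS]
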